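/- Let f : J → J/V be the quotient of the Jacobian J by a maximal isotropic subgroup V ⊂ J[l] (l odd prime ≠ char K), Y the divisor on J/V of the descended principal polarization, X = f^*Y, and 𝔲 = Σ e_i[u_i] a zero-cycle on J with base point y. Then the function η_X[𝔲,y] on J with divisor Σ e_i X_{u_i} − X_{s(𝔲)} − (deg 𝔲 − 1)X and value 1 at y is invariant under translation by V, and equals the pullback under f of the unique function on J/V with divisor Σ e_i Y_{v_i} − Y_{s(𝔳)} − (deg 𝔳 − 1)Y taking value 1 at f(y), where v_i = f(u_i). -/
import Mathlib


/-- Descent of the functions `η_X[𝔲,y]` to the quotient `J/V`.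

`f : J → Jq = J/V` is the quotient of the Jacobian by a maximal isotropic subgroup
`V ⊆ J[l]` (`l` an odd prime). `Yt z` is the translate by `z` of the unique effective
divisor `Y` of the descended principal polarization on `J/V`, and `Xt u = f^*(Y_{f u})`
is the translate `X_u` of `X = f^*Y`. Divisors are modeled as formal `ℤ`-combinations
of subsets, with divisor maps `dvJ`, `dvJq`; `hpull` expresses compatibility of
divisors with pullback along `f`, and `huniqJ` says a function on `J` is determined by
its divisor and one value. Then the function `η = η_X[𝔲,y]` with divisor
`Σ e_i X_{u_i} − X_{s(𝔲)} − (deg 𝔲 − 1)X` and `η(y) = 1` is invariant under translation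
by `V` and equals `ηq ∘ f`, where `ηq` is the unique function on `J/V` with divisor
`Σ e_i Y_{v_i} − Y_{s(𝔳)} − (deg 𝔳 − 1)Y` (`v_i = f(u_i)`) and value `1` at `f(y)`. -/
theorem stmt13 {K J Jq : Type*} [Field K] [AddCommGroup J] [AddCommGroup Jq]
    (l : ℕ) (hl : l.Prime) (hlodd : Odd l)
    (f : J →+ Jq) (hfsurj : Function.Surjective f)
    (V : AddSubgroup J) (hV : V = f.ker) (hVl : ∀ x ∈ V, l • x = 0)
    (Yt : Jq → Set Jq)
    (hYt : ∀ z w : Jq, Yt (z + w) = (· + w) '' Yt z)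
    (Xt : J → Set J) (hXt : ∀ u2 : J, Xt u2 = f ⁻¹' Yt (f u2))
    (dvJ : (J → K) → ((Set J) →₀ ℤ)) (dvJq : (Jq → K) → ((Set Jq) →₀ ℤ))
    (hpull : ∀ φ : Jq → K, dvJ (φ ∘ f) = (dvJq φ).mapDomain fun S => f ⁻¹' S)
    (huniqJ : ∀ (y0 : J) (φ ψ : J → K), dvJ φ = dvJ ψ → φ y0 = ψ y0 → φ = ψ)
    (I : ℕ) (e : Fin I → ℤ) (u : Fin I → J) (y : J)
    (η : J → K)
    (hη : dvJ η = (∑ i, e i • Finsupp.single (Xt (u i)) 1)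
      - Finsupp.single (Xt (∑ i, e i • u i)) 1
      - ((∑ i, e i) - 1) • Finsupp.single (Xt 0) 1)
    (hηy : η y = 1)
    (ηq : Jq → K)
    (hηq : dvJq ηq = (∑ i, e i • Finsupp.single (Yt (f (u i))) 1)
      - Finsupp.single (Yt (f (∑ i, e i • u i))) 1
      - ((∑ i, e i) - 1) • Finsupp.single (Yt 0) 1)
    (hηqy : ηq (f y) = 1) :
    (∀ v ∈ V, ∀ x : J, η (x + v) = η x) ∧ η = ηq ∘ f := by
  have heq : η = ηq ∘ f := by
    refine (huniqJ y (ηq ∘ f) η ?_ (by simpa using hηqy.trans hηy.symm)).symm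
    rw [hpull, hηq, hη]
    rw [show (Finsupp.mapDomain (fun S : Set Jq => f ⁻¹' S) : (Set Jq →₀ ℤ) → (Set J →₀ ℤ))
      = Finsupp.mapDomain.addMonoidHom (fun S => f ⁻¹' S) from rfl]
    simp only [map_sub, map_sum, map_zsmul, Finsupp.mapDomain.addMonoidHom_apply,
      Finsupp.mapDomain_single, hXt, map_zero]
  refine ⟨fun v hv x => ?_, heq⟩
  have hfv : f v = 0 := by rw [hV] at hv; exact hv
  rw [heq]
  simp [map_add, hfv]
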